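/- Fix n ≥ 2, let E = {[w] ⊕ (z·I_{n−1}) : z, w ∈ ℂ} ⊂ ℂ^{n×n}, and let A ∈ ℂ^{n×n}. Writing π_n(A) = (X(A), Y(A)) with X(A) ∈ ℂⁿ given by X_{j+1}(A) = Σ_{I∈𝓘^{j+1}: i₁=1} det(A_I) (and X₁(A)=a_{1,1}) and Y(A) ∈ ℂ^{n−1} given by Y_j(A) = Σ_{I∈𝓘^j: i₁≥2} det(A_I), one has for every M = [w] ⊕ (z·I_{n−1}): det(I − AM) = (1 + Σ_{j=1}^{n−1} (−1)^j Y_j(A) z^j) − w·(Σ_{j=0}^{n−1} (−1)^j X_{j+1}(A) z^j). -/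

import Mathlib

open Matrix BigOperators

/-- Determinant of the principal submatrix of `A` indexed by `s`. -/
noncomputable def subDet {m : ℕ} (A : Matrix (Fin m) (Fin m) ℂ) (s : Finset (Fin m)) : ℂ :=
  Matrix.det (A.submatrix (fun i : {a : Fin m // a ∈ s} => (i : Fin m))
    (fun i : {a : Fin m // a ∈ s} => (i : Fin m)))

/-- `piX A j` = sum of dets of `j × j` principal submatrices whose index set contains 0. -/
noncomputable def piX {m : ℕ} [NeZero m] (A : Matrix (Fin m) (Fin m) ℂ) (j : ℕ) : ℂ :=
  ∑ s ∈ Finset.univ.filter (fun s : Finset (Fin m) => s.card = j ∧ (0 : Fin m) ∈ s),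
    subDet A s

/-- `piY A j` = sum of dets of `j × j` principal submatrices whose index set avoids 0. -/
noncomputable def piY {m : ℕ} [NeZero m] (A : Matrix (Fin m) (Fin m) ℂ) (j : ℕ) : ℂ :=
  ∑ s ∈ Finset.univ.filter (fun s : Finset (Fin m) => s.card = j ∧ (0 : Fin m) ∉ s),
    subDet A s

/-- The block-diagonal matrix `[w] ⊕ (z·I_{n+1})`. -/
noncomputable def bdiag (n : ℕ) (w z : ℂ) : Matrix (Fin (n+2)) (Fin (n+2)) ℂ :=
  Matrix.diagonal (fun i => if i = 0 then w else z)

/-- For `M = [w] ⊕ zI`: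
`det(I − AM) = (1 + Σ_{j=1}^{n−1} (−1)^j Y_j(A) z^j) − w Σ_{j=0}^{n−1} (−1)^j X_{j+1}(A) z^j`. -/
lemma subDet_empty {m : ℕ} (A : Matrix (Fin m) (Fin m) ℂ) : subDet A ∅ = 1 := by
  haveI : IsEmpty {a : Fin m // a ∈ (∅ : Finset (Fin m))} :=
    ⟨fun x => absurd x.2 (Finset.notMem_empty _)⟩
  exact Matrix.det_isEmpty

lemma piY_zero {m : ℕ} [NeZero m] (A : Matrix (Fin m) (Fin m) ℂ) : piY A 0 = 1 := by
  have h : Finset.univ.filter (fun s : Finset (Fin m) => s.card = 0 ∧ (0 : Fin m) ∉ s)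
      = {∅} := by
    ext s
    simp [Finset.card_eq_zero]
    rintro rfl
    exact Finset.notMem_empty _
  rw [piY, h, Finset.sum_singleton, subDet_empty]

lemma det_piecewise {m : ℕ} (A : Matrix (Fin m) (Fin m) ℂ) (s : Finset (Fin m)) :
    Matrix.det (s.piecewise Aᵀ (1 : Matrix (Fin m) (Fin m) ℂ)) = subDet A s := by
  classical
  let e : {x // x ∈ s} ⊕ {x // x ∉ s} ≃ Fin m := Equiv.sumCompl (· ∈ s)
  refine (Matrix.det_submatrix_equiv_self e (s.piecewise Aᵀ (1 : Matrix (Fin m) (Fin m) ℂ))).symm.trans ?_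
  have hb : Matrix.submatrix (s.piecewise Aᵀ (1 : Matrix (Fin m) (Fin m) ℂ)) e e =
      Matrix.fromBlocks
        (Aᵀ.submatrix (fun i : {x // x ∈ s} => (i : Fin m)) (fun i : {x // x ∈ s} => (i : Fin m)))
        (Aᵀ.submatrix (fun i : {x // x ∈ s} => (i : Fin m)) (fun i : {x // x ∉ s} => (i : Fin m)))
        0 (1 : Matrix {x // x ∉ s} {x // x ∉ s} ℂ) := by
    ext i j
    cases i with
    | inl i =>
      cases j with
      | inl j => simp [e, Matrix.submatrix, Finset.piecewise, Finset.piecewise_eq_of_mem _ _ _ i.2]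
      | inr j => simp [e, Matrix.submatrix, Finset.piecewise, Finset.piecewise_eq_of_mem _ _ _ i.2]
    | inr i =>
      cases j with
      | inl j =>
        have hij : (i : Fin m) ≠ (j : Fin m) := fun h => i.2 (h ▸ j.2)
        simp [e, Matrix.submatrix, Finset.piecewise, Finset.piecewise_eq_of_notMem _ _ _ i.2, i.2,
          Matrix.one_apply_ne hij]
        exact Matrix.one_apply_ne hij
      | inr j =>
        simp [e, Matrix.submatrix, Finset.piecewise, Finset.piecewise_eq_of_notMem _ _ _ i.2, i.2,
          Matrix.one_apply, Subtype.ext_iff]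
        congr
  rw [hb, Matrix.det_fromBlocks_zero₂₁, Matrix.det_one, mul_one, subDet,
    ← Matrix.det_transpose, Matrix.transpose_submatrix, Matrix.transpose_transpose]

lemma det_one_sub_mul_diagonal {m : ℕ} (A : Matrix (Fin m) (Fin m) ℂ) (d : Fin m → ℂ) :
    Matrix.det (1 - A * Matrix.diagonal d) =
      ∑ s : Finset (Fin m), (∏ i ∈ s, (-d i)) * subDet A s := by
  classical
  have h1 : (1 - A * Matrix.diagonal d) = (1 - Matrix.diagonal d * Aᵀ)ᵀ := by
    rw [Matrix.transpose_sub, Matrix.transpose_one, Matrix.transpose_mul,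
      Matrix.transpose_transpose, Matrix.diagonal_transpose]
  rw [h1, Matrix.det_transpose]
  have h2 : (1 - Matrix.diagonal d * Aᵀ) =
      (show Matrix (Fin m) (Fin m) ℂ from fun i => (-d i) • Aᵀ i) + (1 : Matrix (Fin m) (Fin m) ℂ) := by
    ext i j
    simp [Matrix.sub_apply, Matrix.diagonal_mul, Pi.add_apply]
    change _ = -(d i • Aᵀ i j) + (1 : Matrix (Fin m) (Fin m) ℂ) i j
    simp
    ring
  rw [h2]
  have h3 := (Matrix.detRowAlternating (R := ℂ) (n := Fin m)).toMultilinearMap.map_add_univ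
      (show Matrix (Fin m) (Fin m) ℂ from fun i => (-d i) • Aᵀ i) (1 : Matrix (Fin m) (Fin m) ℂ)
  refine Eq.trans h3 ?_
  refine Finset.sum_congr rfl fun s _ => ?_
  have h4 : s.piecewise (show Matrix (Fin m) (Fin m) ℂ from fun i => (-d i) • Aᵀ i) (1 : Matrix (Fin m) (Fin m) ℂ) =
      s.piecewise (fun i => (-d i) • (s.piecewise Aᵀ (1 : Matrix (Fin m) (Fin m) ℂ)) i)
        (s.piecewise Aᵀ (1 : Matrix (Fin m) (Fin m) ℂ)) := by
    funext i
    by_cases hi : i ∈ s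
    · simp [Finset.piecewise, Finset.piecewise_eq_of_mem _ _ _ hi, hi]
    · simp [Finset.piecewise, Finset.piecewise_eq_of_notMem _ _ _ hi, hi]
  rw [h4]
  have h5 := (Matrix.detRowAlternating (R := ℂ) (n := Fin m)).toMultilinearMap.map_piecewise_smul
    (fun i => -d i) (s.piecewise Aᵀ (1 : Matrix (Fin m) (Fin m) ℂ)) s
  refine Eq.trans h5 ?_
  rw [smul_eq_mul]
  exact congrArg (fun x => (∏ i ∈ s, -d i) * x) (det_piecewise A s)

theorem stmt6 (n : ℕ) (A : Matrix (Fin (n+2)) (Fin (n+2)) ℂ) (w z : ℂ) :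
    Matrix.det (1 - A * bdiag n w z) =
      (1 + ∑ j ∈ Finset.Icc 1 (n+1), (-1 : ℂ) ^ j * piY A j * z ^ j)
        - w * ∑ j ∈ Finset.range (n+2), (-1 : ℂ) ^ j * piX A (j+1) * z ^ j := by
  classical
  set d : Fin (n+2) → ℂ := fun i => if i = 0 then w else z with hd
  have hmaster : Matrix.det (1 - A * bdiag n w z) =
      ∑ s : Finset (Fin (n+2)), (∏ i ∈ s, (-d i)) * subDet A s :=
    det_one_sub_mul_diagonal A d
  rw [hmaster, ← Finset.sum_filter_add_sum_filter_not Finset.univ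
    (fun s : Finset (Fin (n+2)) => (0 : Fin (n+2)) ∈ s)]
  -- X part
  have hX : ∑ s ∈ Finset.univ.filter (fun s : Finset (Fin (n+2)) => (0 : Fin (n+2)) ∈ s),
      (∏ i ∈ s, (-d i)) * subDet A s
      = - (w * ∑ j ∈ Finset.range (n+2), (-1 : ℂ) ^ j * piX A (j+1) * z ^ j) := by
    have hmaps : ∀ s ∈ Finset.univ.filter (fun s : Finset (Fin (n+2)) => (0 : Fin (n+2)) ∈ s),
        s.card - 1 ∈ Finset.range (n+2) := by
      intro s _
      have := Finset.card_le_univ s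
      simp only [Finset.mem_range]
      simp only [Fintype.card_fin] at this
      omega
    rw [← Finset.sum_fiberwise_of_maps_to hmaps]
    rw [Finset.mul_sum, ← Finset.sum_neg_distrib]
    refine Finset.sum_congr rfl fun j hj => ?_
    have hfib : (Finset.univ.filter (fun s : Finset (Fin (n+2)) => (0 : Fin (n+2)) ∈ s)).filter
        (fun s => s.card - 1 = j)
        = Finset.univ.filter (fun s : Finset (Fin (n+2)) => s.card = j + 1 ∧ (0 : Fin (n+2)) ∈ s) := by
      ext s
      simp only [Finset.mem_filter, Finset.mem_univ, true_and]
      constructor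
      · rintro ⟨h0, hc⟩
        have : 1 ≤ s.card := Finset.card_pos.mpr ⟨0, h0⟩
        exact ⟨by omega, h0⟩
      · rintro ⟨hc, h0⟩
        exact ⟨h0, by omega⟩
    rw [hfib]
    have hprod : ∀ s ∈ Finset.univ.filter
        (fun s : Finset (Fin (n+2)) => s.card = j + 1 ∧ (0 : Fin (n+2)) ∈ s),
        (∏ i ∈ s, (-d i)) = (-w) * (-z) ^ j := by
      intro s hs
      simp only [Finset.mem_filter, Finset.mem_univ, true_and] at hs
      obtain ⟨hc, h0⟩ := hs
      rw [← Finset.insert_erase h0, Finset.prod_insert (Finset.notMem_erase _ _)]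
      have h1 : ∀ i ∈ s.erase 0, (-d i) = -z := by
        intro i hi
        have : i ≠ 0 := Finset.ne_of_mem_erase hi
        simp [hd, this]
      rw [Finset.prod_congr rfl h1, Finset.prod_const, Finset.card_erase_of_mem h0, hc]
      simp [hd]
    rw [Finset.sum_congr rfl (fun s hs => by rw [hprod s hs]), ← Finset.mul_sum]
    rw [show Finset.univ.filter
        (fun s : Finset (Fin (n+2)) => s.card = j + 1 ∧ (0 : Fin (n+2)) ∈ s) =
        Finset.univ.filter
        (fun s : Finset (Fin (n+2)) => s.card = j + 1 ∧ (0 : Fin (n+2)) ∈ s) from rfl]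
    rw [← piX]
    rw [neg_pow z j]
    ring
  -- Y part
  have hY : ∑ s ∈ Finset.univ.filter (fun s : Finset (Fin (n+2)) => ¬ (0 : Fin (n+2)) ∈ s),
      (∏ i ∈ s, (-d i)) * subDet A s
      = 1 + ∑ j ∈ Finset.Icc 1 (n+1), (-1 : ℂ) ^ j * piY A j * z ^ j := by
    have hmaps : ∀ s ∈ Finset.univ.filter
        (fun s : Finset (Fin (n+2)) => ¬ (0 : Fin (n+2)) ∈ s),
        s.card ∈ Finset.range (n+2) := by
      intro s hs
      simp only [Finset.mem_filter, Finset.mem_univ, true_and] at hs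
      have hsub : s ⊆ Finset.univ.erase (0 : Fin (n+2)) := fun x hx =>
        Finset.mem_erase.mpr ⟨fun h => hs (h ▸ hx), Finset.mem_univ x⟩
      have := Finset.card_le_card hsub
      rw [Finset.card_erase_of_mem (Finset.mem_univ _), Finset.card_fin] at this
      simp only [Finset.mem_range]
      omega
    rw [← Finset.sum_fiberwise_of_maps_to hmaps]
    have hterm : ∀ j ∈ Finset.range (n+2),
        ∑ s ∈ (Finset.univ.filter
          (fun s : Finset (Fin (n+2)) => ¬ (0 : Fin (n+2)) ∈ s)).filter (fun s => s.card = j),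
          (∏ i ∈ s, (-d i)) * subDet A s = (-1 : ℂ)^j * piY A j * z^j := by
      intro j _
      have hfib : (Finset.univ.filter
          (fun s : Finset (Fin (n+2)) => ¬ (0 : Fin (n+2)) ∈ s)).filter (fun s => s.card = j)
          = Finset.univ.filter
            (fun s : Finset (Fin (n+2)) => s.card = j ∧ (0 : Fin (n+2)) ∉ s) := by
        ext s
        simp only [Finset.mem_filter, Finset.mem_univ, true_and]
        tauto
      rw [hfib]
      have hprod : ∀ s ∈ Finset.univ.filter
          (fun s : Finset (Fin (n+2)) => s.card = j ∧ (0 : Fin (n+2)) ∉ s),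
          (∏ i ∈ s, (-d i)) = (-z) ^ j := by
        intro s hs
        simp only [Finset.mem_filter, Finset.mem_univ, true_and] at hs
        obtain ⟨hc, h0⟩ := hs
        have h1 : ∀ i ∈ s, (-d i) = -z := by
          intro i hi
          have : i ≠ 0 := fun h => h0 (h ▸ hi)
          simp [hd, this]
        rw [Finset.prod_congr rfl h1, Finset.prod_const, hc]
      rw [Finset.sum_congr rfl (fun s hs => by rw [hprod s hs]), ← Finset.mul_sum, ← piY,
        neg_pow z j]
      ring
    rw [Finset.sum_congr rfl hterm]
    have hsplit : Finset.range (n+2) = insert 0 (Finset.Icc 1 (n+1)) := by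
      ext x
      simp only [Finset.mem_range, Finset.mem_insert, Finset.mem_Icc]
      omega
    rw [hsplit, Finset.sum_insert (by simp)]
    rw [piY_zero]
    simp
  rw [hX, hY]
  ring
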